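/- For every m ∈ ℕ and z ∈ ℂ, ∫_ℝ B_s(t,z) f_m(t) dt = ψ^s_m(z); i.e., the Segal–Bargmann transform B_s maps the m-th Hermite function f_m to ψ^s_m. -/

import Mathlib

open MeasureTheory Complex

/-- Physicists' Hermite polynomial `H_m`, as an entire function on `ℂ`:
`H_m(z) = (-1)^m e^{z²} (d/dz)^m e^{-z²}`. -/
noncomputable def Hpoly (m : ℕ) (z : ℂ) : ℂ :=
  (-1 : ℂ) ^ m * Complex.exp (z ^ 2) * iteratedDeriv m (fun w => Complex.exp (-w ^ 2)) z

/-- `ψ^s_m(z) = ((1-s)/(π√s))^{1/2} ((1-s)/(1+s))^{m/2} (2^m m!)^{-1/2} e^{-z²/2} H_m(z)`. -/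
noncomputable def psiS (s : ℝ) (m : ℕ) (z : ℂ) : ℂ :=
  (Real.sqrt ((1 - s) / (Real.pi * Real.sqrt s)) : ℂ)
    * (Real.sqrt (((1 - s) / (1 + s)) ^ m) : ℂ)
    * (1 / (Real.sqrt ((2 : ℝ) ^ m * m.factorial) : ℂ))
    * Complex.exp (-z ^ 2 / 2) * Hpoly m z

/-- Hermite functions `f_m(t) = (2^m m! √π)^{-1/2} e^{-t²/2} H_m(t)` on `ℝ`. -/
noncomputable def fHerm (m : ℕ) (t : ℝ) : ℂ :=
  (1 / (Real.sqrt ((2 : ℝ) ^ m * m.factorial * Real.sqrt Real.pi)) : ℂ)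
    * Complex.exp (-(t : ℂ) ^ 2 / 2) * Hpoly m (t : ℂ)

/-- Segal–Bargmann kernel
`B_s(t,z) = ((1-s²)/(2πs√(sπ)))^{1/2} exp(-t²/(2s) - z²/(2s) + (√(1-s²)/s) t z)`. -/
noncomputable def Bker (s : ℝ) (t z : ℂ) : ℂ :=
  (Real.sqrt ((1 - s ^ 2) / (2 * Real.pi * s * Real.sqrt (s * Real.pi))) : ℂ)
    * Complex.exp (-t ^ 2 / (2 * s) - z ^ 2 / (2 * s)
        + ((Real.sqrt (1 - s ^ 2) / s : ℝ) : ℂ) * t * z)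

namespace SB8

open Polynomial

noncomputable def HP : ℕ → Polynomial ℂ
  | 0 => 1
  | (n+1) => C 2 * X * HP n - (HP n).derivative

lemma HP_deriv : ∀ n : ℕ, (HP n).derivative = C (2*(n:ℂ)) * HP (n-1) := by
  intro n
  induction n using Nat.strong_induction_on with
  | _ n ih =>
    match n with
    | 0 => simp [HP]
    | 1 => simp [HP]
    | (k+2) =>
      show (C 2 * X * HP (k+1) - (HP (k+1)).derivative).derivative = _
      rw [derivative_sub, derivative_mul, derivative_mul,
        ih (k+1) (by omega)]
      simp only [Nat.add_sub_cancel, derivative_mul, derivative_C, derivative_X,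
        zero_mul, mul_one, zero_add]
      rw [ih k (by omega)]
      have hk1 : HP (k+1) = C 2 * X * HP k - (HP k).derivative := rfl
      rw [ih k (by omega)] at hk1
      have h2 : C (2*(↑(k+2):ℂ)) = C (2:ℂ) + C (2*(k+1):ℂ) := by
        rw [← C_add]; congr 1; push_cast; ring
      show _ = C (2*(↑(k+2):ℂ)) * HP (k+1)
      rw [h2, add_mul]
      rw [hk1]
      push_cast
      ring

lemma iter_gauss : ∀ m : ℕ, iteratedDeriv m (fun w : ℂ => Complex.exp (-w^2)) =
    fun z => (-1:ℂ)^m * (HP m).eval z * Complex.exp (-z^2) := by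
  intro m
  induction m with
  | zero => funext z; simp [HP]
  | succ k ih =>
    rw [iteratedDeriv_succ, ih]
    funext z
    have hP : HasDerivAt (fun z : ℂ => ((-1:ℂ)^k) * (HP k).eval z)
        (((-1:ℂ)^k) * (HP k).derivative.eval z) z := ((HP k).hasDerivAt z).const_mul _
    have h1 : HasDerivAt (fun z : ℂ => -z^2) (-(2*z)) z := by
      simpa using (hasDerivAt_pow 2 z).fun_neg
    have he : HasDerivAt (fun z : ℂ => Complex.exp (-z^2))
        (Complex.exp (-z^2) * (-(2*z))) z := h1.cexp
    have := (hP.fun_mul he).deriv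
    rw [this]
    show _ = (-1:ℂ)^(k+1) * (C 2 * X * HP k - (HP k).derivative).eval z * Complex.exp (-z^2)
    simp only [eval_sub, eval_mul, eval_C, eval_X, pow_succ]
    ring

lemma Hpoly_eq (m : ℕ) (z : ℂ) : Hpoly m z = (HP m).eval z := by
  unfold Hpoly
  rw [iter_gauss]
  have h1 : Complex.exp (z^2) * Complex.exp (-z^2) = 1 := by
    rw [← Complex.exp_add]; simp
  have h2 : ((-1:ℂ)^m) * ((-1:ℂ)^m) = 1 := by
    rw [← pow_add]; exact Even.neg_one_pow ⟨m, rfl⟩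
  calc (-1:ℂ)^m * Complex.exp (z^2) * ((-1:ℂ)^m * (HP m).eval z * Complex.exp (-z^2))
      = (((-1:ℂ)^m) * ((-1:ℂ)^m)) * (Complex.exp (z^2) * Complex.exp (-z^2)) * (HP m).eval z := by
        ring
    _ = (HP m).eval z := by rw [h1, h2]; ring

lemma pow_add_le (n : ℕ) {a b : ℝ} (ha : 0 ≤ a) (hb : 0 ≤ b) :
    (a + b)^n ≤ 2^n * (a^n + b^n) := by
  have h1 : a + b ≤ 2 * max a b := by
    rcases le_total a b with h | h
    · simp [max_eq_right h]; linarith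
    · simp [max_eq_left h]; linarith
  calc (a+b)^n ≤ (2 * max a b)^n :=
        pow_le_pow_left₀ (by positivity) h1 n
    _ = 2^n * (max a b)^n := mul_pow 2 _ n
    _ ≤ 2^n * (a^n + b^n) := by
        gcongr
        rcases le_total a b with h | h
        · rw [max_eq_right h]; nlinarith [pow_nonneg ha n]
        · rw [max_eq_left h]; nlinarith [pow_nonneg hb n]

lemma re_neg_sq (y : ℂ) (x : ℝ) : (-(((x:ℂ) - y))^2).re = -(x - y.re)^2 + y.im^2 := by
  simp [pow_two, Complex.mul_re, Complex.sub_re, Complex.sub_im]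
  ring

lemma norm_cexp_shift (y : ℂ) (x : ℝ) :
    ‖Complex.exp (-(((x:ℂ) - y))^2)‖ = Real.exp (-(x - y.re)^2 + y.im^2) := by
  rw [Complex.norm_exp, re_neg_sq]

lemma integrable_gauss_pow (r : ℝ) (n : ℕ) :
    Integrable fun x : ℝ => |x|^n * Real.exp (-(x-r)^2) := by
  have base : Integrable fun x : ℝ => |x|^n * Real.exp (-x^2) := by
    have h1 := integrable_rpow_mul_exp_neg_mul_sq (b := 1) one_pos
      (s := (n:ℝ)) (neg_one_lt_zero.trans_le (Nat.cast_nonneg n))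
    have h2 := h1.norm
    simpa [Real.rpow_natCast, abs_mul, _root_.abs_pow, abs_of_pos (Real.exp_pos _),
      neg_mul, Real.norm_eq_abs] using h2
  have expbase : Integrable fun x : ℝ => Real.exp (-x^2) := by
    simpa [neg_mul] using integrable_exp_neg_mul_sq (b := 1) one_pos
  have shift : Integrable fun x : ℝ => |x - r|^n * Real.exp (-(x-r)^2) :=
    base.comp_sub_right r
  have expshift : Integrable fun x : ℝ => Real.exp (-(x-r)^2) :=
    expbase.comp_sub_right r
  refine Integrable.mono' ((shift.const_mul (2^n)).add ((expshift.const_mul (2^n * |r|^n))))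
    (Continuous.aestronglyMeasurable (by fun_prop)) ?_
  filter_upwards with x
  simp only [Pi.add_apply]
  rw [Real.norm_eq_abs, _root_.abs_of_nonneg (by positivity)]
  have h1 : |x|^n ≤ 2^n * (|x-r|^n + |r|^n) := by
    calc |x|^n ≤ (|x-r| + |r|)^n := by
          apply pow_le_pow_left₀ (abs_nonneg _)
          calc |x| = |(x - r) + r| := by ring_nf
            _ ≤ |x-r| + |r| := abs_add_le _ _
      _ ≤ 2^n * (|x-r|^n + |r|^n) := pow_add_le n (abs_nonneg _) (abs_nonneg _)
  have h2 : (0:ℝ) < Real.exp (-(x-r)^2) := Real.exp_pos _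
  calc |x|^n * Real.exp (-(x-r)^2) ≤ (2^n * (|x-r|^n + |r|^n)) * Real.exp (-(x-r)^2) :=
        mul_le_mul_of_nonneg_right h1 h2.le
    _ = 2^n * (|x-r|^n * Real.exp (-(x-r)^2)) + 2^n * |r|^n * Real.exp (-(x-r)^2) := by ring

lemma integrable_gauss_poly (y : ℂ) (p : Polynomial ℂ) :
    Integrable fun x : ℝ => Complex.exp (-(((x:ℂ) - y))^2) * p.eval (x:ℂ) := by
  induction p using Polynomial.induction_on' with
  | add p q hp hq => simpa [mul_add] using hp.fun_add hq
  | monomial n a =>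
    have key : Integrable fun x : ℝ =>
        Real.exp (y.im^2) * ‖a‖ * (|x|^n * Real.exp (-(x - y.re)^2)) :=
      (integrable_gauss_pow y.re n).const_mul _
    refine Integrable.mono' key (Continuous.aestronglyMeasurable ?_) ?_
    · exact (Complex.continuous_exp.comp
        (((Complex.continuous_ofReal.sub continuous_const).pow 2).neg)).mul
        ((Polynomial.monomial n a).continuous.comp Complex.continuous_ofReal)
    · filter_upwards with x
      rw [norm_mul, norm_cexp_shift]
      simp only [Polynomial.eval_monomial, norm_mul, norm_pow]
      rw [Real.exp_add]
      have : ‖(x:ℂ)‖ = |x| := Complex.norm_real x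
      rw [this]
      ring_nf
      nlinarith [Real.exp_pos (-(x - y.re)^2), Real.exp_pos (y.im^2),
        pow_nonneg (abs_nonneg x) n, norm_nonneg a]

noncomputable def Ig (y : ℂ) (p : Polynomial ℂ) : ℂ :=
  ∫ x : ℝ, Complex.exp (-(((x:ℂ) - y))^2) * p.eval (x:ℂ)

lemma Ig_add (y : ℂ) (p q : Polynomial ℂ) : Ig y (p + q) = Ig y p + Ig y q := by
  unfold Ig
  simp only [Polynomial.eval_add, mul_add]
  exact integral_add (integrable_gauss_poly y p) (integrable_gauss_poly y q)

lemma Ig_sub (y : ℂ) (p q : Polynomial ℂ) : Ig y (p - q) = Ig y p - Ig y q := by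
  unfold Ig
  simp only [Polynomial.eval_sub, mul_sub]
  exact integral_sub (integrable_gauss_poly y p) (integrable_gauss_poly y q)

lemma Ig_Cmul (y : ℂ) (a : ℂ) (p : Polynomial ℂ) : Ig y (C a * p) = a * Ig y p := by
  unfold Ig
  simp only [Polynomial.eval_mul, Polynomial.eval_C]
  rw [← integral_const_mul]
  congr 1; funext x; ring

lemma Ig_zero (y : ℂ) : Ig y 0 = 0 := by
  have := Ig_Cmul y 0 0
  simpa using this

lemma Ig_one (y : ℂ) : Ig y 1 = (Real.sqrt Real.pi : ℂ) := by
  unfold Ig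
  simp only [Polynomial.eval_one, mul_one]
  have h : ∀ x : ℝ, -(((x:ℂ) - y))^2 = (-1)*(x:ℂ)^2 + (2*y)*(x:ℂ) + (-(y^2)) := by
    intro x; ring
  simp_rw [h]
  rw [integral_cexp_quadratic (by norm_num : (-1:ℂ).re < 0) (2*y) (-(y^2))]
  have h2 : (-(y^2) - (2*y)^2/(4*(-1)) : ℂ) = 0 := by ring
  rw [h2, Complex.exp_zero, mul_one]
  rw [show (↑Real.pi / -(-1) : ℂ) = (Real.pi : ℂ) by norm_num]
  rw [show ((1:ℂ)/2) = ((1/2 : ℝ) : ℂ) by norm_num]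
  rw [← Complex.ofReal_cpow Real.pi_pos.le]
  rw [Real.sqrt_eq_rpow]

lemma Ig_parts (y : ℂ) (p : Polynomial ℂ) :
    Ig y (C 2 * X * p) = 2*y*Ig y p + Ig y p.derivative := by
  have hzero : Ig y (p.derivative + C (2*y) * p - C 2 * X * p) = 0 := by
    unfold Ig
    have hderiv : ∀ x : ℝ, HasDerivAt (fun t : ℝ => Complex.exp (-(((t:ℂ) - y))^2) * p.eval (t:ℂ))
        (Complex.exp (-(((x:ℂ) - y))^2) *
          (p.derivative + C (2*y) * p - C 2 * X * p).eval (x:ℂ)) x := by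
      intro x
      have h1 : HasDerivAt (fun w : ℂ => -(w - y)^2) (-(2*((x:ℂ)-y))) (x:ℂ) := by
        simpa using (((hasDerivAt_id ((x:ℂ))).sub_const y).fun_pow 2).fun_neg
      have he := h1.cexp
      have hp := p.hasDerivAt ((x:ℂ))
      have hG := he.fun_mul hp
      have := hG.comp_ofReal
      convert this using 1
      simp only [Polynomial.eval_sub, Polynomial.eval_add, Polynomial.eval_mul,
        Polynomial.eval_C, Polynomial.eval_X]
      ring
    have hint1 := integrable_gauss_poly y (p.derivative + C (2*y) * p - C 2 * X * p)
    have hint2 := integrable_gauss_poly y p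
    exact integral_eq_zero_of_hasDerivAt_of_integrable hderiv hint1 hint2
  rw [Ig_sub, Ig_add, Ig_Cmul] at hzero
  linear_combination -hzero

lemma Ig_step (α : ℝ) (y : ℂ) (m : ℕ) :
    Ig y ((HP (m+1)).comp (C (α:ℂ) * X)) =
      2*(α:ℂ)*y * Ig y ((HP m).comp (C (α:ℂ) * X))
        + ((α:ℂ)^2 - 1) * Ig y (((HP m).derivative).comp (C (α:ℂ) * X)) := by
  set φ : Polynomial ℂ := C (α:ℂ) * X with hφ
  have e1 : (HP (m+1)).comp φ = C ((α:ℂ)) * (C 2 * X * ((HP m).comp φ))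
      - (HP m).derivative.comp φ := by
    show (C 2 * X * HP m - (HP m).derivative).comp φ = _
    rw [sub_comp, mul_comp, mul_comp, C_comp, X_comp]
    ring
  have e2 : ((HP m).comp φ).derivative = C (α:ℂ) * ((HP m).derivative.comp φ) := by
    have hd : φ.derivative = C (α:ℂ) := by rw [hφ]; simp
    rw [derivative_comp, hd]
  rw [e1, Ig_sub, Ig_Cmul, Ig_parts, e2, Ig_Cmul]
  ring

lemma Ig_HP (α γ : ℝ) (hγ : γ ≠ 0) (h : (α:ℂ)^2 + (γ:ℂ)^2 = 1) (y : ℂ) :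
    ∀ m : ℕ, Ig y ((HP m).comp (C (α:ℂ) * X)) =
      (Real.sqrt Real.pi : ℂ) * (γ:ℂ)^m * (HP m).eval ((α:ℂ) * y / (γ:ℂ)) := by
  have hγ' : (γ:ℂ) ≠ 0 := Complex.ofReal_ne_zero.mpr hγ
  intro m
  induction m using Nat.strong_induction_on with
  | _ m ih =>
    match m with
    | 0 => simp [HP, Ig_one]
    | 1 =>
      rw [Ig_step]
      have h0 : HP 0 = 1 := rfl
      rw [h0]
      simp only [derivative_one, Polynomial.zero_comp, one_comp]
      rw [Ig_one]
      show _ = _ * _ * (C 2 * X * HP 0 - (HP 0).derivative).eval _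
      rw [h0]
      simp only [derivative_one, eval_sub, eval_mul, eval_C, eval_X, eval_one, eval_zero]
      rw [Ig_zero]
      field_simp
      ring
    | (k+2) =>
      rw [Ig_step, HP_deriv (k+1)]
      simp only [Nat.add_sub_cancel]
      rw [mul_comp, C_comp, Ig_Cmul, ih (k+1) (by omega), ih k (by omega)]
      show _ = _ * _ * (C 2 * X * HP (k+1) - (HP (k+1)).derivative).eval _
      rw [HP_deriv (k+1)]
      simp only [Nat.add_sub_cancel, eval_sub, eval_mul, eval_C, eval_X]
      have hg2 : (α:ℂ)^2 - 1 = -(γ:ℂ)^2 := by linear_combination h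
      rw [hg2]
      push_cast
      field_simp
      ring

end SB8

/-- The Segal–Bargmann transform maps the Hermite function `f_m` to `ψ^s_m`. -/
theorem statement8 (s : ℝ) (hs0 : 0 < s) (hs1 : s < 1) (m : ℕ) (z : ℂ) :
    ∫ t : ℝ, Bker s (t : ℂ) z * fHerm m t = psiS s m z := by
  have hsp : (0:ℝ) < 1 + s := by linarith
  have h1s : (0:ℝ) < 1 - s := by linarith
  have hs2 : (0:ℝ) < 1 - s^2 := by nlinarith
  set L : ℝ := Real.sqrt ((1+s)/(2*s)) with hLdef
  have hLpos : 0 < L := Real.sqrt_pos.mpr (by positivity)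
  have hL2 : L^2 = (1+s)/(2*s) := Real.sq_sqrt (by positivity)
  set α : ℝ := L⁻¹ with hαdef
  have hαpos : 0 < α := by positivity
  have hα2 : α^2 = 2*s/(1+s) := by
    rw [hαdef, inv_pow, hL2, inv_div]
  set γ : ℝ := Real.sqrt ((1-s)/(1+s)) with hγdef
  have hγpos : 0 < γ := Real.sqrt_pos.mpr (by positivity)
  have hγ2 : γ^2 = (1-s)/(1+s) := Real.sq_sqrt (by positivity)
  have hαγr : α^2 + γ^2 = 1 := by rw [hα2, hγ2]; field_simp; ring
  have hαγ : ((α:ℝ):ℂ)^2 + ((γ:ℝ):ℂ)^2 = 1 := by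
    have h := congrArg Complex.ofReal hαγr; push_cast at h; linear_combination h
  have hsb : Real.sqrt (1-s^2) = (1+s)*γ := by
    rw [hγdef, show (1:ℝ)-s^2 = (1+s)^2*((1-s)/(1+s)) by field_simp; ring,
      Real.sqrt_mul (sq_nonneg _), Real.sqrt_sq hsp.le]
  -- real scalar facts
  have hss : Real.sqrt (1-s^2)^2 = 1-s^2 := Real.sq_sqrt hs2.le
  have g1r : α^2/(2*s) + α^2/2 = 1 := by rw [hα2]; field_simp
  have g2r : (Real.sqrt (1-s^2)/s)^2*α^2/4 + 1/2 - 1/(2*s) = 0 := by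
    rw [div_pow, hss, hα2]; field_simp; ring
  have hyzr : Real.sqrt (1-s^2) * α^2 = 2*s*γ := by rw [hsb, hα2]; field_simp
  -- complex versions
  have g1 : ((α:ℝ):ℂ)^2/(2*(s:ℂ)) + ((α:ℝ):ℂ)^2/2 = 1 := by
    have h := congrArg Complex.ofReal g1r; push_cast at h; linear_combination h
  have g2 : (((Real.sqrt (1-s^2):ℝ):ℂ)/(s:ℂ))^2*((α:ℝ):ℂ)^2/4 + 1/2 - 1/(2*(s:ℂ)) = 0 := by
    have h := congrArg Complex.ofReal g2r; push_cast at h; linear_combination h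
  have hyz : ((Real.sqrt (1-s^2):ℝ):ℂ) * ((α:ℝ):ℂ)^2 = 2*(s:ℂ)*((γ:ℝ):ℂ) := by
    have h := congrArg Complex.ofReal hyzr; push_cast at h; linear_combination h
  set y : ℂ := ((Real.sqrt (1-s^2):ℝ):ℂ)/(s:ℂ) * ((α:ℝ):ℂ) * z / 2 with hydef
  set Q : Polynomial ℂ := (SB8.HP m).comp (Polynomial.C ((α:ℝ):ℂ) * Polynomial.X) with hQdef
  have hQeval : ∀ x : ℝ, Q.eval (x:ℂ) = (SB8.HP m).eval (((α:ℝ):ℂ) * (x:ℂ)) := by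
    intro x
    rw [hQdef, Polynomial.eval_comp, Polynomial.eval_mul, Polynomial.eval_C, Polynomial.eval_X]
  set f : ℝ → ℂ := fun t => Bker s (t:ℂ) z * fHerm m t with hfdef
  -- pointwise identity
  have hpt : ∀ x : ℝ, f (α*x)
      = ((Real.sqrt ((1 - s ^ 2) / (2 * Real.pi * s * Real.sqrt (s * Real.pi))):ℝ):ℂ)
        * (1 / ((Real.sqrt ((2:ℝ)^m * m.factorial * Real.sqrt Real.pi):ℝ):ℂ))
        * Complex.exp (-z^2/2)
        * (Complex.exp (-(((x:ℂ) - y))^2) * Q.eval (x:ℂ)) := by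
    intro x
    rw [hfdef]
    simp only [Bker, fHerm, SB8.Hpoly_eq, hQeval x]
    push_cast
    set X : ℂ := (x:ℂ) with hX
    set A : ℂ := ((α:ℝ):ℂ) with hA
    set R : ℂ := ((Real.sqrt (1-s^2):ℝ):ℂ) with hR
    have hce : Complex.exp (-(A*X)^2/(2*(s:ℂ)) - z^2/(2*(s:ℂ)) + R/(s:ℂ)*(A*X)*z)
        * Complex.exp (-(A*X)^2/2)
        = Complex.exp (-((X - y))^2) * Complex.exp (-z^2/2) := by
      rw [← Complex.exp_add, ← Complex.exp_add]
      congr 1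
      rw [hydef]
      linear_combination (-(X^2))*g1 + (z^2)*g2
    linear_combination (((Real.sqrt ((1 - s ^ 2) / (2 * Real.pi * s * Real.sqrt (s * Real.pi))):ℝ):ℂ)
        * (1 / ((Real.sqrt ((2:ℝ)^m * m.factorial * Real.sqrt Real.pi):ℝ):ℂ))
        * (SB8.HP m).eval (A * X)) * hce
  have hcv : (∫ t:ℝ, f t) = α • ∫ x:ℝ, f (α*x) := by
    rw [MeasureTheory.Measure.integral_comp_mul_left f α]
    rw [smul_smul, abs_of_pos (inv_pos.mpr hαpos), mul_inv_cancel₀ hαpos.ne', one_smul]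
  have hγ0 : ((γ:ℝ):ℂ) ≠ 0 := Complex.ofReal_ne_zero.mpr hγpos.ne'
  have hs0' : ((s:ℝ):ℂ) ≠ 0 := Complex.ofReal_ne_zero.mpr hs0.ne'
  have hyγz : ((α:ℝ):ℂ) * y / ((γ:ℝ):ℂ) = z := by
    rw [hydef]
    field_simp
    linear_combination z * hyz
  have hfun : (fun x:ℝ => f (α*x)) = fun x:ℝ =>
      ((Real.sqrt ((1 - s ^ 2) / (2 * Real.pi * s * Real.sqrt (s * Real.pi))):ℝ):ℂ)
        * (1 / ((Real.sqrt ((2:ℝ)^m * m.factorial * Real.sqrt Real.pi):ℝ):ℂ))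
        * Complex.exp (-z^2/2)
        * (Complex.exp (-(((x:ℂ) - y))^2) * Q.eval (x:ℂ)) := funext hpt
  have hconst : α * Real.sqrt ((1-s^2)/(2*Real.pi*s*Real.sqrt (s*Real.pi)))
      * (1/Real.sqrt ((2:ℝ)^m * (m.factorial:ℝ) * Real.sqrt Real.pi)) * Real.sqrt Real.pi * γ^m
      = Real.sqrt ((1-s)/(Real.pi*Real.sqrt s)) * Real.sqrt (((1-s)/(1+s))^m)
        * (1/Real.sqrt ((2:ℝ)^m * (m.factorial:ℝ))) := by
    have hrad1 : (0:ℝ) ≤ (1-s^2)/(2*Real.pi*s*Real.sqrt (s*Real.pi)) :=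
      div_nonneg hs2.le (by positivity)
    have hrad2 : (0:ℝ) < (2:ℝ)^m * (m.factorial:ℝ) * Real.sqrt Real.pi := by
      have : (0:ℝ) < (m.factorial:ℝ) := by exact_mod_cast m.factorial_pos
      positivity
    have hrad3 : (0:ℝ) ≤ (1-s)/(Real.pi*Real.sqrt s) := div_nonneg h1s.le (by positivity)
    have hrad4 : (0:ℝ) ≤ ((1-s)/(1+s))^m := pow_nonneg (div_nonneg h1s.le hsp.le) m
    have hrad5 : (0:ℝ) < (2:ℝ)^m * (m.factorial:ℝ) := by
      have : (0:ℝ) < (m.factorial:ℝ) := by exact_mod_cast m.factorial_pos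
      positivity
    have hLnn : 0 ≤ α * Real.sqrt ((1-s^2)/(2*Real.pi*s*Real.sqrt (s*Real.pi)))
        * (1/Real.sqrt ((2:ℝ)^m * (m.factorial:ℝ) * Real.sqrt Real.pi)) * Real.sqrt Real.pi * γ^m := by
      positivity
    have hRnn : 0 ≤ Real.sqrt ((1-s)/(Real.pi*Real.sqrt s)) * Real.sqrt (((1-s)/(1+s))^m)
        * (1/Real.sqrt ((2:ℝ)^m * (m.factorial:ℝ))) := by positivity
    have hsq : (α * Real.sqrt ((1-s^2)/(2*Real.pi*s*Real.sqrt (s*Real.pi)))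
        * (1/Real.sqrt ((2:ℝ)^m * (m.factorial:ℝ) * Real.sqrt Real.pi)) * Real.sqrt Real.pi * γ^m)^2
        = (Real.sqrt ((1-s)/(Real.pi*Real.sqrt s)) * Real.sqrt (((1-s)/(1+s))^m)
          * (1/Real.sqrt ((2:ℝ)^m * (m.factorial:ℝ))))^2 := by
      simp only [mul_pow, one_div, inv_pow]
      rw [Real.sq_sqrt hrad1, Real.sq_sqrt hrad2.le, Real.sq_sqrt Real.pi_pos.le,
        Real.sq_sqrt hrad3, Real.sq_sqrt hrad4, Real.sq_sqrt hrad5.le,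
        show (γ^m)^2 = (γ^2)^m by rw [← pow_mul, ← pow_mul, mul_comm], hγ2, hα2,
        Real.sqrt_mul hs0.le]
      set u := Real.sqrt s with hu
      set v := Real.sqrt Real.pi with hv
      have hu2 : u^2 = s := Real.sq_sqrt hs0.le
      have hv2 : v^2 = Real.pi := Real.sq_sqrt Real.pi_pos.le
      have hune : u ≠ 0 := by rw [hu]; exact (Real.sqrt_pos.mpr hs0).ne'
      have hvne : v ≠ 0 := by rw [hv]; exact (Real.sqrt_pos.mpr Real.pi_pos).ne'
      have hfne : ((m.factorial:ℝ)) ≠ 0 := by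
        have : (0:ℝ) < (m.factorial:ℝ) := by exact_mod_cast m.factorial_pos
        exact this.ne'
      have h2ne : ((2:ℝ)^m) ≠ 0 := by positivity
      rw [← hu2, ← hv2]
      field_simp
      ring
    calc α * Real.sqrt ((1-s^2)/(2*Real.pi*s*Real.sqrt (s*Real.pi)))
        * (1/Real.sqrt ((2:ℝ)^m * (m.factorial:ℝ) * Real.sqrt Real.pi)) * Real.sqrt Real.pi * γ^m
        = Real.sqrt ((α * Real.sqrt ((1-s^2)/(2*Real.pi*s*Real.sqrt (s*Real.pi)))
          * (1/Real.sqrt ((2:ℝ)^m * (m.factorial:ℝ) * Real.sqrt Real.pi)) * Real.sqrt Real.pi * γ^m)^2) :=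
          (Real.sqrt_sq hLnn).symm
      _ = Real.sqrt ((Real.sqrt ((1-s)/(Real.pi*Real.sqrt s)) * Real.sqrt (((1-s)/(1+s))^m)
          * (1/Real.sqrt ((2:ℝ)^m * (m.factorial:ℝ))))^2) := by rw [hsq]
      _ = _ := Real.sqrt_sq hRnn
  calc (∫ t:ℝ, f t) = α • ∫ x:ℝ, f (α*x) := hcv
    _ = α • (((Real.sqrt ((1 - s ^ 2) / (2 * Real.pi * s * Real.sqrt (s * Real.pi))):ℝ):ℂ)
        * (1 / ((Real.sqrt ((2:ℝ)^m * m.factorial * Real.sqrt Real.pi):ℝ):ℂ))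
        * Complex.exp (-z^2/2) * SB8.Ig y Q) := by
        rw [hfun, MeasureTheory.integral_const_mul]
        rfl
    _ = psiS s m z := by
        rw [SB8.Ig_HP α γ hγpos.ne' hαγ y m, hyγz]
        rw [psiS, SB8.Hpoly_eq, Complex.real_smul]
        have hc := congrArg Complex.ofReal hconst
        push_cast at hc
        linear_combination (Complex.exp (-z^2/2) * (SB8.HP m).eval z) * hc
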